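/- arXiv:1711.06797 — 6 statements merged into one kernel-verified Lean document; each statement's English description precedes it below -/
import Mathlib

section
/- Let E_1,...,E_n be events in a probability space and G a graph on [n] such that Pr[E_i | ∩_{j∈J} ¬E_j] ≤ p_i for every i and every J ⊆ [n]∖Γ⁺(i) with Pr[∩_{j∈J} ¬E_j] > 0. Define P̆_A = Pr[∩_{i∈A} ¬E_i]. Then for each a ∈ A ⊆ [n] with P̆_{A∖Γ⁺(a)} > 0, one has P̆_A ≥ P̆_{A∖{a}} − p_a · P̆_{A∖Γ⁺(a)}. -/
open Finset MeasureTheory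

/-- `I` is an independent set of `G`. -/
def Indep {n : ℕ} (G : SimpleGraph (Fin n)) (I : Finset (Fin n)) : Prop :=
  ∀ i ∈ I, ∀ j ∈ I, ¬ G.Adj i j

instance {n : ℕ} (G : SimpleGraph (Fin n)) [DecidableRel G.Adj] (I : Finset (Fin n)) :
    Decidable (Indep G I) := by unfold Indep; infer_instance

/-- Closed neighborhood `Γ⁺(a)`. -/
def Gp {n : ℕ} (G : SimpleGraph (Fin n)) [DecidableRel G.Adj] (a : Fin n) : Finset (Fin n) :=
  insert a (G.neighborFinset a)

/-- Shearer coefficient `q̆_S`. -/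
def qb {n : ℕ} (G : SimpleGraph (Fin n)) [DecidableRel G.Adj] (p : Fin n → ℝ)
    (S : Finset (Fin n)) : ℝ :=
  ∑ I ∈ S.powerset.filter (fun I => Indep G I), (-1 : ℝ) ^ I.card * ∏ i ∈ I, p i

/-- Cluster-expansion polynomial `Y_S`. -/
def Yf {n : ℕ} (G : SimpleGraph (Fin n)) [DecidableRel G.Adj] (y : Fin n → ℝ)
    (S : Finset (Fin n)) : ℝ :=
  ∑ I ∈ S.powerset.filter (fun I => Indep G I), ∏ i ∈ I, y i

theorem fundamental_inequality {Ω : Type*} [MeasurableSpace Ω] (μ : Measure Ω) [IsProbabilityMeasure μ]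
    {n : ℕ} (G : SimpleGraph (Fin n)) [DecidableRel G.Adj]
    (E : Fin n → Set Ω) (hE : ∀ i, MeasurableSet (E i)) (p : Fin n → ℝ)
    (hp : ∀ i, p i ∈ Set.Icc (0 : ℝ) 1)
    (hdep : ∀ i, ∀ J : Finset (Fin n), J ⊆ Finset.univ \ Gp G i →
      0 < (μ (⋂ j ∈ J, (E j)ᶜ)).toReal →
      (μ (E i ∩ ⋂ j ∈ J, (E j)ᶜ)).toReal / (μ (⋂ j ∈ J, (E j)ᶜ)).toReal ≤ p i)
    (A : Finset (Fin n)) (a : Fin n) (ha : a ∈ A)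
    (hpos : 0 < (μ (⋂ i ∈ A \ Gp G a, (E i)ᶜ)).toReal) :
    (μ (⋂ i ∈ A, (E i)ᶜ)).toReal ≥
      (μ (⋂ i ∈ A.erase a, (E i)ᶜ)).toReal -
        p a * (μ (⋂ i ∈ A \ Gp G a, (E i)ᶜ)).toReal := by
  set S := ⋂ i ∈ A.erase a, (E i)ᶜ with hS
  set N := ⋂ i ∈ A \ Gp G a, (E i)ᶜ with hN
  have hSmeas : MeasurableSet S := Finset.measurableSet_biInter _ (fun i _ => (hE i).compl)
  -- split: μ S = μ (S ∩ E a) + μ (S \ E a)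
  have hsplit : μ (S ∩ E a) + μ (S \ E a) = μ S := measure_inter_add_diff S (hE a)
  have hAeq : (⋂ i ∈ A, (E i)ᶜ) = S \ E a := by
    rw [← Finset.insert_erase ha]
    rw [Finset.set_biInter_insert]
    rw [Set.inter_comm, Set.diff_eq]
  have hfin1 : μ (S ∩ E a) ≠ ⊤ := measure_ne_top μ _
  have hfin2 : μ (S \ E a) ≠ ⊤ := measure_ne_top μ _
  have hsplit' : (μ (S ∩ E a)).toReal + (μ (S \ E a)).toReal = (μ S).toReal := by
    rw [← ENNReal.toReal_add hfin1 hfin2, hsplit]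
  -- S ∩ E a ⊆ E a ∩ N
  have hsub : S ∩ E a ⊆ E a ∩ N := by
    intro x hx
    refine ⟨hx.2, ?_⟩
    have hxS : x ∈ S := hx.1
    rw [hS, Set.mem_iInter₂] at hxS
    rw [hN, Set.mem_iInter₂]
    intro i hi
    rw [Finset.mem_sdiff] at hi
    refine hxS i ?_
    rw [Finset.mem_erase]
    exact ⟨fun h => hi.2 (by rw [h]; unfold Gp; exact Finset.mem_insert_self a _), hi.1⟩
  have hdep' := hdep a (A \ Gp G a) (by
    intro x hx
    rw [Finset.mem_sdiff] at hx ⊢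
    exact ⟨Finset.mem_univ x, hx.2⟩) hpos
  have hEaN : (μ (E a ∩ N)).toReal ≤ p a * (μ N).toReal := by
    rw [div_le_iff₀ hpos] at hdep'
    exact hdep'
  have hmono : (μ (S ∩ E a)).toReal ≤ (μ (E a ∩ N)).toReal := by
    apply ENNReal.toReal_mono (measure_ne_top μ _)
    exact measure_mono hsub
  rw [hAeq]
  linarith
end

section
/- (Lopsided Shearer's Lemma) Let E_1,...,E_n be events and G a graph on [n] satisfying the lopsidependency condition Pr[E_i | ∩_{j∈J} ¬E_j] ≤ p_i for all i and all J ⊆ [n]∖Γ⁺(i) (whenever the conditioning event has positive probability). Define q̆_S = Σ_{I⊆S, I independent} (-1)^{|I|} ∏_{i∈I} p_i. If q̆_S ≥ 0 for all S ⊆ [n], then for every A ⊆ [n], Pr[∩_{j∈A} ¬E_j] ≥ q̆_A. -/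
open Finset MeasureTheory

lemma qb_rec {n : ℕ} (G : SimpleGraph (Fin n)) [DecidableRel G.Adj] (p : Fin n → ℝ)
    {S : Finset (Fin n)} {i : Fin n} (hi : i ∈ S) :
    qb G p S = qb G p (S.erase i) - p i * qb G p (S \ Gp G i) := by
  classical
  unfold qb
  rw [← Finset.sum_filter_add_sum_filter_not (S.powerset.filter (fun I => Indep G I))
    (fun I => i ∈ I)]
  have hnot : (S.powerset.filter (fun I => Indep G I)).filter (fun I => ¬ i ∈ I)
      = (S.erase i).powerset.filter (fun I => Indep G I) := by
    ext I
    simp only [Finset.mem_filter, Finset.mem_powerset, Finset.subset_erase]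
    tauto
  have hin : ∑ I ∈ (S.powerset.filter (fun I => Indep G I)).filter (fun I => i ∈ I),
      (-1 : ℝ) ^ I.card * ∏ j ∈ I, p j
      = - (p i * ∑ J ∈ (S \ Gp G i).powerset.filter (fun I => Indep G I),
          (-1 : ℝ) ^ J.card * ∏ j ∈ J, p j) := by
    rw [Finset.mul_sum, ← Finset.sum_neg_distrib]
    refine Finset.sum_bij' (fun I _ => I.erase i) (fun J _ => insert i J) ?_ ?_ ?_ ?_ ?_
    · intro I hI
      simp only [Finset.mem_filter, Finset.mem_powerset] at hI ⊢
      obtain ⟨⟨hIS, hInd⟩, hiI⟩ := hI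
      refine ⟨?_, ?_⟩
      · intro j hj
        rw [Finset.mem_erase] at hj
        rw [Finset.mem_sdiff]
        refine ⟨hIS hj.2, ?_⟩
        simp only [Gp, Finset.mem_insert, SimpleGraph.mem_neighborFinset]
        push_neg
        exact ⟨fun h => hj.1 (h ▸ rfl), fun h => hInd i hiI j hj.2 h⟩
      · intro a ha b hb
        exact hInd a (Finset.mem_of_mem_erase ha) b (Finset.mem_of_mem_erase hb)
    · intro J hJ
      simp only [Finset.mem_filter, Finset.mem_powerset] at hJ ⊢
      obtain ⟨hJS, hInd⟩ := hJ
      have hiJ : i ∉ J := by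
        intro h
        have := hJS h
        rw [Finset.mem_sdiff] at this
        exact this.2 (by simp [Gp])
      refine ⟨⟨?_, ?_⟩, Finset.mem_insert_self i J⟩
      · intro a ha
        rcases Finset.mem_insert.mp ha with rfl | ha
        · exact hi
        · exact (Finset.mem_sdiff.mp (hJS ha)).1
      · have hnadj : ∀ j ∈ J, ¬ G.Adj i j := by
          intro j hj h
          have := Finset.mem_sdiff.mp (hJS hj)
          exact this.2 (by simp [Gp, SimpleGraph.mem_neighborFinset]; exact Or.inr h)
        intro a ha b hb h
        rcases Finset.mem_insert.mp ha with rfl | ha'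
        · rcases Finset.mem_insert.mp hb with rfl | hb'
          · exact G.irrefl h
          · exact hnadj b hb' h
        · rcases Finset.mem_insert.mp hb with rfl | hb'
          · exact hnadj a ha' h.symm
          · exact hInd a ha' b hb' h
    · intro I hI
      simp only [Finset.mem_filter] at hI
      exact Finset.insert_erase hI.2
    · intro J hJ
      simp only [Finset.mem_filter, Finset.mem_powerset] at hJ
      apply Finset.erase_insert
      intro h
      have := hJ.1 h
      rw [Finset.mem_sdiff] at this
      exact this.2 (by simp [Gp])
    · intro I hI
      simp only [Finset.mem_filter] at hI
      obtain ⟨_, hiI⟩ := hI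
      have hiI' : i ∉ I.erase i := Finset.notMem_erase i I
      conv_lhs => rw [← Finset.insert_erase hiI]
      rw [Finset.card_insert_of_notMem hiI', Finset.prod_insert hiI']
      ring
  rw [hnot, hin]
  ring

lemma qb_nonneg_prod {n : ℕ} (G : SimpleGraph (Fin n)) [DecidableRel G.Adj] (p : Fin n → ℝ)
    (hp : ∀ i, 0 ≤ p i) (hq : ∀ S, 0 ≤ qb G p S) {S : Finset (Fin n)} {i : Fin n} (hi : i ∈ S) :
    qb G p S ≤ qb G p (S.erase i) := by
  have h := qb_rec G p hi
  nlinarith [hq (S \ Gp G i), hp i]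

noncomputable def PP {Ω : Type*} [MeasurableSpace Ω] (μ : Measure Ω) {n : ℕ}
    (E : Fin n → Set Ω) (S : Finset (Fin n)) : ℝ :=
  (μ (⋂ j ∈ S, (E j)ᶜ)).toReal

lemma sdiff_subset_erase {n : ℕ} (G : SimpleGraph (Fin n)) [DecidableRel G.Adj]
    (S : Finset (Fin n)) (i : Fin n) : S \ Gp G i ⊆ S.erase i := by
  intro j hj
  rw [Finset.mem_sdiff] at hj
  rw [Finset.mem_erase]
  exact ⟨fun h => hj.2 (h ▸ by simp [Gp]), hj.1⟩

lemma PP_rec {Ω : Type*} [MeasurableSpace Ω] (μ : Measure Ω) [IsProbabilityMeasure μ]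
    {n : ℕ} (G : SimpleGraph (Fin n)) [DecidableRel G.Adj]
    (E : Fin n → Set Ω) (hE : ∀ i, MeasurableSet (E i)) (p : Fin n → ℝ)
    (hp : ∀ i, 0 ≤ p i)
    (hdep : ∀ i, ∀ J : Finset (Fin n), J ⊆ Finset.univ \ Gp G i →
      0 < (μ (⋂ j ∈ J, (E j)ᶜ)).toReal →
      (μ (E i ∩ ⋂ j ∈ J, (E j)ᶜ)).toReal / (μ (⋂ j ∈ J, (E j)ᶜ)).toReal ≤ p i)
    {S : Finset (Fin n)} {i : Fin n} (hi : i ∈ S) :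
    PP μ E S ≥ PP μ E (S.erase i) - p i * PP μ E (S \ Gp G i) := by
  classical
  set X := ⋂ j ∈ S.erase i, (E j)ᶜ with hX
  set Y := ⋂ j ∈ (S \ Gp G i), (E j)ᶜ with hY
  have hSX : (⋂ j ∈ S, (E j)ᶜ) = (E i)ᶜ ∩ X := by
    conv_lhs => rw [← Finset.insert_erase hi, Finset.set_biInter_insert]
  have hsplit : μ (X ∩ E i) + μ (X \ E i) = μ X := measure_inter_add_diff X (hE i)
  have hdiff : X \ E i = (E i)ᶜ ∩ X := by rw [Set.diff_eq, Set.inter_comm]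
  have htr : (μ (X ∩ E i)).toReal + (μ ((E i)ᶜ ∩ X)).toReal = (μ X).toReal := by
    rw [← ENNReal.toReal_add (measure_ne_top μ _) (measure_ne_top μ _), ← hdiff, hsplit]
  have hXY : X ⊆ Y := by
    intro x hx
    simp only [hX, hY, Set.mem_iInter] at hx ⊢
    intro j hj
    exact hx j (sdiff_subset_erase G S i hj)
  have hbound : (μ (X ∩ E i)).toReal ≤ p i * (μ Y).toReal := by
    have hmono : (μ (X ∩ E i)).toReal ≤ (μ (E i ∩ Y)).toReal := by
      apply ENNReal.toReal_mono (measure_ne_top μ _)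
      apply measure_mono
      intro x hx
      exact ⟨hx.2, hXY hx.1⟩
    rcases lt_or_ge 0 (μ Y).toReal with hpos | hle
    · have h1 := hdep i (S \ Gp G i) (by
        intro j hj
        rw [Finset.mem_sdiff] at hj ⊢
        exact ⟨Finset.mem_univ j, hj.2⟩) hpos
      rw [div_le_iff₀ hpos] at h1
      exact hmono.trans h1
    · have h0 : (μ Y).toReal = 0 := le_antisymm hle ENNReal.toReal_nonneg
      have h2 : (μ (X ∩ E i)).toReal ≤ (μ Y).toReal := by
        apply ENNReal.toReal_mono (measure_ne_top μ _)
        exact measure_mono (fun x hx => hXY hx.1)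
      rw [h0] at h2
      rw [h0, mul_zero]
      exact h2
  have : PP μ E S = (μ ((E i)ᶜ ∩ X)).toReal := by rw [PP, hSX]
  rw [this]
  have hPX : PP μ E (S.erase i) = (μ X).toReal := rfl
  have hPY : PP μ E (S \ Gp G i) = (μ Y).toReal := rfl
  rw [hPX, hPY]
  linarith

lemma shearer_main {Ω : Type*} [MeasurableSpace Ω] (μ : Measure Ω) [IsProbabilityMeasure μ]
    {n : ℕ} (G : SimpleGraph (Fin n)) [DecidableRel G.Adj]
    (E : Fin n → Set Ω) (hE : ∀ i, MeasurableSet (E i)) (p : Fin n → ℝ)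
    (hp : ∀ i, 0 ≤ p i)
    (hdep : ∀ i, ∀ J : Finset (Fin n), J ⊆ Finset.univ \ Gp G i →
      0 < (μ (⋂ j ∈ J, (E j)ᶜ)).toReal →
      (μ (E i ∩ ⋂ j ∈ J, (E j)ᶜ)).toReal / (μ (⋂ j ∈ J, (E j)ᶜ)).toReal ≤ p i)
    (hq : ∀ S : Finset (Fin n), 0 ≤ qb G p S) :
    ∀ S : Finset (Fin n), ∀ T ⊆ S, qb G p T * PP μ E S ≥ qb G p S * PP μ E T := by
  intro S
  induction S using Finset.strongInductionOn with
  | _ S IH =>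
    intro T hTS
    rcases hTS.ssubset_or_eq with hss | rfl
    · obtain ⟨i, hiS, hiT⟩ := Finset.exists_of_ssubset hss
      have hiSS : S.erase i ⊂ S := Finset.erase_ssubset hiS
      have hP1 := PP_rec μ G E hE p hp hdep hiS
      have hsub := sdiff_subset_erase G S i
      have h2 := IH (S.erase i) hiSS (S \ Gp G i) hsub
      have hqrec := qb_rec G p hiS
      have hq1 := hq (S.erase i)
      have hq2 := hq S
      have hq3 := hq (S \ Gp G i)
      have hqT := hq T
      have hPn : 0 ≤ PP μ E (S.erase i) := ENNReal.toReal_nonneg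
      have hPn2 : 0 ≤ PP μ E (S \ Gp G i) := ENNReal.toReal_nonneg
      have hPnT : 0 ≤ PP μ E T := ENNReal.toReal_nonneg
      have hPnS : 0 ≤ PP μ E S := ENNReal.toReal_nonneg
      have step1 : qb G p (S.erase i) * PP μ E S ≥ qb G p S * PP μ E (S.erase i) := by
        nlinarith [mul_le_mul_of_nonneg_left h2 (hp i), mul_le_mul_of_nonneg_left hP1 hq1]
      have hT' : T ⊆ S.erase i := Finset.subset_erase.mpr ⟨hTS, hiT⟩
      have h3 := IH (S.erase i) hiSS T hT'
      rcases eq_or_lt_of_le hq1 with hz | hpos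
      · have hqS0 : qb G p S = 0 := le_antisymm (by nlinarith [mul_nonneg (hp i) hq3]) hq2
        rw [hqS0, zero_mul]
        exact mul_nonneg hqT hPnS
      · have key : qb G p (S.erase i) * (qb G p S * PP μ E T)
            ≤ qb G p (S.erase i) * (qb G p T * PP μ E S) := by
          nlinarith [mul_le_mul_of_nonneg_left step1 hqT, mul_le_mul_of_nonneg_left h3 hq2]
        exact le_of_mul_le_mul_left key hpos
    · exact le_refl _

theorem lopsided_shearer {Ω : Type*} [MeasurableSpace Ω] (μ : Measure Ω) [IsProbabilityMeasure μ]
    {n : ℕ} (G : SimpleGraph (Fin n)) [DecidableRel G.Adj]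
    (E : Fin n → Set Ω) (hE : ∀ i, MeasurableSet (E i)) (p : Fin n → ℝ)
    (hp : ∀ i, p i ∈ Set.Icc (0 : ℝ) 1)
    (hdep : ∀ i, ∀ J : Finset (Fin n), J ⊆ Finset.univ \ Gp G i →
      0 < (μ (⋂ j ∈ J, (E j)ᶜ)).toReal →
      (μ (E i ∩ ⋂ j ∈ J, (E j)ᶜ)).toReal / (μ (⋂ j ∈ J, (E j)ᶜ)).toReal ≤ p i)
    (hq : ∀ S : Finset (Fin n), 0 ≤ qb G p S) :
    ∀ A : Finset (Fin n), (μ (⋂ j ∈ A, (E j)ᶜ)).toReal ≥ qb G p A := by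
  intro A
  have h := shearer_main μ G E hE p (fun i => (hp i).1) hdep hq A ∅ (Finset.empty_subset A)
  have hq0 : qb G p (∅ : Finset (Fin n)) = 1 := by
    rw [qb]
    rw [show Finset.filter (fun I => Indep G I) (∅ : Finset (Fin n)).powerset = {∅} by
      ext I; simp only [Finset.mem_filter, Finset.mem_powerset, Finset.subset_empty, Finset.mem_singleton]; constructor; · exact fun h => h.1
      · rintro rfl; exact ⟨rfl, by simp [Indep]⟩]
    simp
  have hP0 : PP μ E (∅ : Finset (Fin n)) = 1 := by
    simp [PP]
  rw [hq0, hP0, one_mul, mul_one] at h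
  exact h
end

section
/- Under the hypotheses of the lopsided Shearer's Lemma (lopsidependency with bounds p_i and q̆_S ≥ 0 for all S), the key inductive inequality holds: for all a ∈ A ⊆ [n] with q̆_{A∖{a}} > 0 and P̆_{A∖{a}} > 0, P̆_A / P̆_{A∖{a}} ≥ q̆_A / q̆_{A∖{a}}, where P̆_S = Pr[∩_{i∈S} ¬E_i]. -/
open Finset MeasureTheory

section comb
variable {n : ℕ} (G : SimpleGraph (Fin n)) [DecidableRel G.Adj] (p : Fin n → ℝ)

lemma indep_insert_iff {a : Fin n} {J : Finset (Fin n)} (haJ : a ∉ J) :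
    Indep G (insert a J) ↔ Indep G J ∧ ∀ j ∈ J, ¬ G.Adj a j := by
  constructor
  · intro h
    exact ⟨fun i hi j hj => h i (mem_insert_of_mem hi) j (mem_insert_of_mem hj),
      fun j hj => h a (mem_insert_self _ _) j (mem_insert_of_mem hj)⟩
  · rintro ⟨h1, h2⟩ i hi j hj hadj
    rcases mem_insert.1 hi with hi' | hi' <;> rcases mem_insert.1 hj with hj' | hj'
    · subst hi'; subst hj'; exact G.irrefl hadj
    · subst hi'; exact h2 j hj' hadj
    · subst hj'; exact h2 i hi' hadj.symm
    · exact h1 i hi' j hj' hadj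

lemma qb_erase {a : Fin n} {A : Finset (Fin n)} (ha : a ∈ A) :
    qb G p A = qb G p (A.erase a) - p a * qb G p (A \ Gp G a) := by
  classical
  have hA : A = insert a (A.erase a) := (Finset.insert_erase ha).symm
  have hnot : a ∉ A.erase a := Finset.notMem_erase a A
  set f : Finset (Fin n) → ℝ := fun I =>
    if Indep G I then (-1 : ℝ) ^ I.card * ∏ i ∈ I, p i else 0 with hf
  have hqb : ∀ S : Finset (Fin n), qb G p S = ∑ I ∈ S.powerset, f I := by
    intro S; rw [qb, Finset.sum_filter]
  rw [hqb, hqb, hqb, hA, Finset.sum_powerset_insert hnot]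
  have key : ∑ J ∈ (A.erase a).powerset, f (insert a J)
      = - (p a * ∑ I ∈ (A \ Gp G a).powerset, f I) := by
    have hsub : (A \ Gp G a).powerset
        = (A.erase a).powerset.filter (fun J => J ⊆ A \ Gp G a) := by
      ext J
      simp only [mem_powerset, mem_filter]
      constructor
      · intro h
        refine ⟨h.trans ?_, h⟩
        intro x hx
        rw [Finset.mem_sdiff] at hx
        exact Finset.mem_erase.2 ⟨fun hxa => hx.2 (hxa ▸ Finset.mem_insert_self _ _), hx.1⟩
      · exact fun h => h.2
    rw [hsub, Finset.sum_filter, Finset.mul_sum, ← Finset.sum_neg_distrib]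
    refine Finset.sum_congr rfl ?_
    intro J hJ
    rw [mem_powerset] at hJ
    have haJ : a ∉ J := fun h => hnot (hJ h)
    have hcard : (insert a J).card = J.card + 1 := Finset.card_insert_of_notMem haJ
    have hprod : ∏ i ∈ insert a J, p i = p a * ∏ i ∈ J, p i :=
      Finset.prod_insert haJ
    by_cases hind : Indep G (insert a J)
    · have h2 := (indep_insert_iff G haJ).1 hind
      have hJsub : J ⊆ A \ Gp G a := by
        intro x hx
        rw [Finset.mem_sdiff]
        refine ⟨Finset.mem_of_mem_erase (hJ hx), ?_⟩
        intro hxg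
        rcases Finset.mem_insert.1 hxg with rfl | hxg
        · exact haJ hx
        · exact h2.2 x hx ((SimpleGraph.mem_neighborFinset G a x).1 hxg)
      simp only [hf, hind, if_true, h2.1, if_true, hJsub, if_true, hcard, hprod,
        pow_succ]
      ring
    · have : ¬ (J ⊆ A \ Gp G a ∧ Indep G J) := by
        rintro ⟨hJsub, hJind⟩
        apply hind
        rw [indep_insert_iff G haJ]
        refine ⟨hJind, fun j hj hadj => ?_⟩
        have := hJsub hj
        rw [Finset.mem_sdiff] at this
        exact this.2 (Finset.mem_insert_of_mem ((SimpleGraph.mem_neighborFinset G a j).2 hadj))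
      simp only [hf, hind, if_false]
      by_cases h1 : J ⊆ A \ Gp G a
      · have h2 : ¬ Indep G J := fun h => this ⟨h1, h⟩
        simp [h1, h2]
      · simp [h1]
  rw [key, Finset.erase_insert hnot, ← hA]; ring
end comb

section mono
variable {n : ℕ} (G : SimpleGraph (Fin n)) [DecidableRel G.Adj] (p : Fin n → ℝ)
  (hp0 : ∀ i, 0 ≤ p i) (hq : ∀ S : Finset (Fin n), 0 ≤ qb G p S)

include hp0 hq

lemma qb_le_erase (a : Fin n) (A : Finset (Fin n)) :
    qb G p A ≤ qb G p (A.erase a) := by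
  by_cases ha : a ∈ A
  · rw [qb_erase G p ha]
    have := mul_nonneg (hp0 a) (hq (A \ Gp G a))
    linarith
  · rw [Finset.erase_eq_of_notMem ha]

lemma qb_mono : ∀ (k : ℕ) (S T : Finset (Fin n)), S ⊆ T → (T \ S).card = k →
    qb G p T ≤ qb G p S := by
  intro k
  induction k with
  | zero =>
    intro S T hST hcard
    have hTS : T = S := Finset.Subset.antisymm (fun x hx => by
      by_contra hxS
      have hmem : x ∈ T \ S := Finset.mem_sdiff.2 ⟨hx, hxS⟩
      rw [Finset.card_eq_zero.1 hcard] at hmem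
      exact absurd hmem (Finset.notMem_empty x)) hST
    rw [hTS]
  | succ k ih =>
    intro S T hST hcard
    have hne : (T \ S).Nonempty := by
      rw [← Finset.card_pos, hcard]; exact Nat.succ_pos k
    obtain ⟨a, haTS⟩ := hne
    rw [Finset.mem_sdiff] at haTS
    have h1 : S ⊆ T.erase a := fun x hx =>
      Finset.mem_erase.2 ⟨fun h => haTS.2 (h ▸ hx), hST hx⟩
    have h2 : (T.erase a \ S).card = k := by
      have : T.erase a \ S = (T \ S).erase a := by
        ext x; simp only [Finset.mem_sdiff, Finset.mem_erase]; tauto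
      rw [this, Finset.card_erase_of_mem (Finset.mem_sdiff.2 haTS), hcard]
      rfl
    exact le_trans (qb_le_erase G p hp0 hq a T) (ih S (T.erase a) h1 h2)

lemma qb_mono' {S T : Finset (Fin n)} (hST : S ⊆ T) : qb G p T ≤ qb G p S :=
  qb_mono G p hp0 hq _ S T hST rfl
end mono

section meas
variable {Ω : Type*} [MeasurableSpace Ω] (μ : Measure Ω) [IsProbabilityMeasure μ]
  {n : ℕ} (E : Fin n → Set Ω) (hE : ∀ i, MeasurableSet (E i))

noncomputable def Pb (S : Finset (Fin n)) : ℝ := (μ (⋂ i ∈ S, (E i)ᶜ)).toReal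

lemma Pb_mono {S T : Finset (Fin n)} (hST : S ⊆ T) : Pb μ E T ≤ Pb μ E S := by
  apply ENNReal.toReal_mono (measure_ne_top μ _)
  exact measure_mono (Set.biInter_subset_biInter_left hST)

lemma Pb_nonneg (S : Finset (Fin n)) : 0 ≤ Pb μ E S := ENNReal.toReal_nonneg
end meas

section main
variable {Ω : Type*} [MeasurableSpace Ω] (μ : Measure Ω) [IsProbabilityMeasure μ]
  {n : ℕ} (G : SimpleGraph (Fin n)) [DecidableRel G.Adj]
  (E : Fin n → Set Ω) (hE : ∀ i, MeasurableSet (E i)) (p : Fin n → ℝ)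
  (hp : ∀ i, p i ∈ Set.Icc (0 : ℝ) 1)
  (hdep : ∀ i, ∀ J : Finset (Fin n), J ⊆ Finset.univ \ Gp G i →
    0 < (μ (⋂ j ∈ J, (E j)ᶜ)).toReal →
    (μ (E i ∩ ⋂ j ∈ J, (E j)ᶜ)).toReal / (μ (⋂ j ∈ J, (E j)ᶜ)).toReal ≤ p i)
  (hq : ∀ S : Finset (Fin n), 0 ≤ qb G p S)

lemma sdiff_gp_subset_erase (a : Fin n) (A : Finset (Fin n)) :
    A \ Gp G a ⊆ A.erase a := by
  intro x hx
  rw [Finset.mem_sdiff] at hx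
  exact Finset.mem_erase.2 ⟨fun h => hx.2 (h ▸ Finset.mem_insert_self _ _), hx.1⟩

include hE hp hdep in
lemma Pb_step {a : Fin n} {A : Finset (Fin n)} (ha : a ∈ A) :
    Pb μ E (A.erase a) - p a * Pb μ E (A \ Gp G a) ≤ Pb μ E A := by
  classical
  set N := ⋂ i ∈ (A.erase a : Finset (Fin n)), (E i)ᶜ with hN
  set B := A \ Gp G a with hB
  set M := ⋂ i ∈ (B : Finset (Fin n)), (E i)ᶜ with hM
  have hNM' : N ⊆ M :=
    Set.biInter_subset_biInter_left (Finset.coe_subset.2 (sdiff_gp_subset_erase G a A))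
  have hsplit : (⋂ i ∈ A, (E i)ᶜ) = (E a)ᶜ ∩ N := by
    conv_lhs => rw [← Finset.insert_erase ha]
    rw [Finset.set_biInter_insert]
  have hadd : μ N = μ (N ∩ E a) + μ (N \ E a) := (measure_inter_add_diff N (hE a)).symm
  have hdiff : N \ E a = (E a)ᶜ ∩ N := by
    rw [Set.diff_eq, Set.inter_comm]
  have htr : (μ N).toReal = (μ (N ∩ E a)).toReal + (μ ((E a)ᶜ ∩ N)).toReal := by
    rw [← hdiff, ← ENNReal.toReal_add (measure_ne_top μ _) (measure_ne_top μ _), ← hadd]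
  have hbound : (μ (N ∩ E a)).toReal ≤ p a * Pb μ E B := by
    have hsubM : N ∩ E a ⊆ E a ∩ M := fun x hx => ⟨hx.2, hNM' hx.1⟩
    by_cases hpos : 0 < Pb μ E B
    · have hJ : B ⊆ Finset.univ \ Gp G a := by
        intro x hx
        rw [Finset.mem_sdiff] at hx ⊢
        exact ⟨Finset.mem_univ x, hx.2⟩
      have hpos' : 0 < (μ (⋂ j ∈ B, (E j)ᶜ)).toReal := hpos
      have := hdep a B hJ hpos'
      rw [div_le_iff₀ hpos'] at this
      calc (μ (N ∩ E a)).toReal ≤ (μ (E a ∩ M)).toReal :=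
            ENNReal.toReal_mono (measure_ne_top μ _) (measure_mono hsubM)
        _ ≤ p a * Pb μ E B := this
    · have h0 : Pb μ E B = 0 := le_antisymm (not_lt.1 hpos) (Pb_nonneg μ E B)
      have : (μ (N ∩ E a)).toReal ≤ Pb μ E B := by
        apply ENNReal.toReal_mono (measure_ne_top μ _)
        exact measure_mono (fun x hx => hNM' hx.1)
      rw [h0] at this ⊢
      linarith [mul_nonneg (hp a).1 (le_refl (0:ℝ))]
  have hPA : Pb μ E A = (μ ((E a)ᶜ ∩ N)).toReal := by rw [Pb, hsplit]
  have hPN : Pb μ E (A.erase a) = (μ N).toReal := rfl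
  rw [hPA, hPN] at *
  linarith

include hE hp hdep hq in
lemma shearer_key : ∀ (N : ℕ) (C : Finset (Fin n)), C.card ≤ N →
    0 < qb G p C → 0 < Pb μ E C →
    ∀ B ⊆ C, qb G p C * Pb μ E B ≤ qb G p B * Pb μ E C := by
  intro N
  induction N with
  | zero =>
    intro C hcard _ _ B hB
    have hC : C = ∅ := Finset.card_eq_zero.1 (Nat.le_zero.1 hcard)
    subst hC
    rw [Finset.subset_empty.1 hB]
  | succ N ih =>
    intro C hcard hqC hPC B hB
    by_cases hBC : B = C
    · subst hBC; exact le_rfl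
    · obtain ⟨a, haC, haB⟩ : ∃ a ∈ C, a ∉ B := by
        by_contra h
        push_neg at h
        exact hBC (Finset.Subset.antisymm hB h)
      set Ca := C.erase a with hCa
      have hcardCa : Ca.card ≤ N := by
        rw [hCa, Finset.card_erase_of_mem haC]
        omega
      have hqCa : 0 < qb G p Ca :=
        lt_of_lt_of_le hqC (qb_le_erase G p (fun i => (hp i).1) hq a C)
      have hPCa : 0 < Pb μ E Ca :=
        lt_of_lt_of_le hPC (Pb_mono μ E (Finset.erase_subset a C))
      have hD : C \ Gp G a ⊆ Ca := sdiff_gp_subset_erase G a C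
      have IH1 := ih Ca hcardCa hqCa hPCa (C \ Gp G a) hD
      have hBCa : B ⊆ Ca := fun x hx =>
        Finset.mem_erase.2 ⟨fun h => haB (h ▸ hx), hB hx⟩
      have IH2 := ih Ca hcardCa hqCa hPCa B hBCa
      have hstep := Pb_step μ G E hE p hp hdep haC
      have hqe := qb_erase G p haC
      have S1 : qb G p C * Pb μ E Ca ≤ qb G p Ca * Pb μ E C := by
        nlinarith [mul_le_mul_of_nonneg_left hstep (le_of_lt hqCa),
          mul_le_mul_of_nonneg_left IH1 (hp a).1]
      have hprod := mul_le_mul S1 IH2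
        (mul_nonneg (le_of_lt hqCa) (Pb_nonneg μ E B))
        (mul_nonneg (le_of_lt hqCa) (Pb_nonneg μ E C))
      have hfinal : qb G p C * Pb μ E B * (qb G p Ca * Pb μ E Ca) ≤
          qb G p B * Pb μ E C * (qb G p Ca * Pb μ E Ca) := by nlinarith [hprod]
      exact le_of_mul_le_mul_right hfinal (mul_pos hqCa hPCa)
end main

theorem shearer_key_inequality {Ω : Type*} [MeasurableSpace Ω] (μ : Measure Ω) [IsProbabilityMeasure μ]
    {n : ℕ} (G : SimpleGraph (Fin n)) [DecidableRel G.Adj]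
    (E : Fin n → Set Ω) (hE : ∀ i, MeasurableSet (E i)) (p : Fin n → ℝ)
    (hp : ∀ i, p i ∈ Set.Icc (0 : ℝ) 1)
    (hdep : ∀ i, ∀ J : Finset (Fin n), J ⊆ Finset.univ \ Gp G i →
      0 < (μ (⋂ j ∈ J, (E j)ᶜ)).toReal →
      (μ (E i ∩ ⋂ j ∈ J, (E j)ᶜ)).toReal / (μ (⋂ j ∈ J, (E j)ᶜ)).toReal ≤ p i)
    (hq : ∀ S : Finset (Fin n), 0 ≤ qb G p S)
    (A : Finset (Fin n)) (a : Fin n) (ha : a ∈ A)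
    (hq' : 0 < qb G p (A.erase a))
    (hP' : 0 < (μ (⋂ i ∈ A.erase a, (E i)ᶜ)).toReal) :
    (μ (⋂ i ∈ A, (E i)ᶜ)).toReal / (μ (⋂ i ∈ A.erase a, (E i)ᶜ)).toReal ≥
      qb G p A / qb G p (A.erase a) := by
  show Pb μ E A / Pb μ E (A.erase a) ≥ qb G p A / qb G p (A.erase a)
  have hP'' : 0 < Pb μ E (A.erase a) := hP'
  set Ca := A.erase a with hCa
  have hD : A \ Gp G a ⊆ Ca := sdiff_gp_subset_erase G a A
  have IH1 := shearer_key μ G E hE p hp hdep hq Ca.card Ca le_rfl hq' hP''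
    (A \ Gp G a) hD
  have hstep := Pb_step μ G E hE p hp hdep ha
  have hqe := qb_erase G p ha
  have S1 : qb G p A * Pb μ E Ca ≤ qb G p Ca * Pb μ E A := by
    nlinarith [mul_le_mul_of_nonneg_left hstep (le_of_lt hq'),
      mul_le_mul_of_nonneg_left IH1 (hp a).1]
  rw [ge_iff_le, div_le_div_iff₀ hq' hP'']
  linarith
end

section
/- Suppose events E_1,...,E_n and graph G satisfy the lopsidependency condition Pr[E_i | ∩_{j∈J} ¬E_j] ≤ p_i for all J ⊆ [n]∖Γ⁺(i), and there exist y_1,...,y_n > 0 with p_i ≤ y_i / Y_{Γ⁺(i)} for each i, where Y_S = Σ_{I⊆S, I∈Ind(G)} ∏_{i∈I} y_i. Then for every a ∈ S ⊆ [n], P̆_S > 0 and P̆_S / P̆_{S∖{a}} ≥ Y_{S^c} / Y_{(S∖{a})^c}, where S^c = [n]∖S and P̆_S = Pr[∩_{i∈S} ¬E_i]. -/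
open Finset MeasureTheory

section Aux

variable {n : ℕ} (G : SimpleGraph (Fin n)) [DecidableRel G.Adj] {y : Fin n → ℝ}

lemma Indep_subset {I J : Finset (Fin n)} (h : I ⊆ J) (hJ : Indep G J) : Indep G I :=
  fun i hi j hj => hJ i (h hi) j (h hj)

lemma Yf_pos (hy : ∀ i, 0 < y i) (S : Finset (Fin n)) : 0 < Yf G y S := by
  have h0 : (∅ : Finset (Fin n)) ∈ S.powerset.filter (fun I => Indep G I) := by
    rw [Finset.mem_filter]
    exact ⟨Finset.empty_mem_powerset _, fun i hi => absurd hi (Finset.notMem_empty i)⟩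
  have h1 : (1:ℝ) ≤ Yf G y S := by
    have := Finset.single_le_sum (f := fun I => ∏ i ∈ I, y i)
      (fun i _ => Finset.prod_nonneg fun j _ => (hy j).le) h0
    simpa [Yf] using this
  linarith

lemma Yf_union_le (hy : ∀ i, 0 < y i) (A B : Finset (Fin n)) (hAB : Disjoint A B) :
    Yf G y (A ∪ B) ≤ Yf G y A * Yf G y B := by
  rw [Yf, Yf, Yf, Finset.sum_mul_sum, ← Finset.sum_product']
  set FA := A.powerset.filter (fun I => Indep G I) with hFA
  set FB := B.powerset.filter (fun I => Indep G I) with hFB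
  set F := (A ∪ B).powerset.filter (fun I => Indep G I) with hF
  have hrec : ∀ I ∈ F, (I ∩ A) ∪ (I ∩ B) = I := by
    intro I hI
    simp only [hF, Finset.mem_filter, Finset.mem_powerset] at hI
    rw [← Finset.inter_union_distrib_left, Finset.inter_eq_left.2 hI.1]
  have hinj : Set.InjOn (fun I => (I ∩ A, I ∩ B)) F := by
    intro I hI J hJ hIJ
    simp only [Prod.mk.injEq] at hIJ
    rw [← hrec I hI, ← hrec J hJ, hIJ.1, hIJ.2]
  calc ∑ I ∈ F, ∏ i ∈ I, y i
      = ∑ I ∈ F, ((∏ i ∈ I ∩ A, y i) * (∏ i ∈ I ∩ B, y i)) := by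
        apply Finset.sum_congr rfl
        intro I hI
        rw [← Finset.prod_union (Finset.disjoint_of_subset_left Finset.inter_subset_right
          (Finset.disjoint_of_subset_right Finset.inter_subset_right hAB)), hrec I hI]
    _ = ∑ q ∈ F.image (fun I => (I ∩ A, I ∩ B)), (∏ i ∈ q.1, y i) * (∏ i ∈ q.2, y i) := by
        rw [Finset.sum_image (fun I hI J hJ h => hinj hI hJ h)]
    _ ≤ ∑ q ∈ FA ×ˢ FB, (∏ i ∈ q.1, y i) * (∏ i ∈ q.2, y i) := by
        apply Finset.sum_le_sum_of_subset_of_nonneg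
        · intro q hq
          simp only [Finset.mem_image] at hq
          obtain ⟨I, hI, rfl⟩ := hq
          simp only [hF, Finset.mem_filter, Finset.mem_powerset] at hI
          simp only [hFA, hFB, Finset.mem_product, Finset.mem_filter, Finset.mem_powerset]
          exact ⟨⟨Finset.inter_subset_right, Indep_subset G Finset.inter_subset_left hI.2⟩,
            ⟨Finset.inter_subset_right, Indep_subset G Finset.inter_subset_left hI.2⟩⟩
        · intro q _ _
          exact mul_nonneg (Finset.prod_nonneg fun j _ => (hy j).le)
            (Finset.prod_nonneg fun j _ => (hy j).le)

lemma Yf_identity (a : Fin n) (S : Finset (Fin n)) (ha : a ∈ S) :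
    Yf G y S = Yf G y (S.erase a) + y a * Yf G y (S \ Gp G a) := by
  have hae : a ∉ S.erase a := Finset.notMem_erase a S
  have hYS : Yf G y S = ∑ I ∈ S.powerset, (if Indep G I then ∏ i ∈ I, y i else 0) := by
    rw [Yf, Finset.sum_filter]
  have h2 : ∑ I ∈ S.powerset, (if Indep G I then ∏ i ∈ I, y i else 0) =
      ∑ I ∈ (S.erase a).powerset, (if Indep G I then ∏ i ∈ I, y i else 0) +
      ∑ I ∈ (S.erase a).powerset, (if Indep G (insert a I) then ∏ i ∈ insert a I, y i else 0) := by
    conv_lhs => rw [← Finset.insert_erase ha]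
    exact Finset.sum_powerset_insert hae _
  rw [hYS, h2]
  congr 1
  · rw [Yf, Finset.sum_filter]
  · have hsub : S \ Gp G a ⊆ S.erase a := by
      intro j hj
      simp only [Finset.mem_sdiff, Gp, Finset.mem_insert] at hj
      exact Finset.mem_erase.2 ⟨fun h => hj.2 (Or.inl h), hj.1⟩
    have hstep : ∀ I ∈ (S.erase a).powerset,
        (if Indep G (insert a I) then ∏ i ∈ insert a I, y i else 0) =
        (if I ∈ (S \ Gp G a).powerset ∧ Indep G I then y a * ∏ i ∈ I, y i else 0) := by
      intro I hI
      simp only [Finset.mem_powerset] at hI ⊢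
      have haI : a ∉ I := fun h => hae (hI h)
      have hiff : Indep G (insert a I) ↔ (I ⊆ S \ Gp G a ∧ Indep G I) := by
        constructor
        · intro h
          refine ⟨fun j hj => ?_, fun i hi j hj => h i (Finset.mem_insert_of_mem hi) j (Finset.mem_insert_of_mem hj)⟩
          have hjS : j ∈ S := (Finset.erase_subset a S) (hI hj)
          have hja : ¬ G.Adj a j := h a (Finset.mem_insert_self a I) j (Finset.mem_insert_of_mem hj)
          simp only [Finset.mem_sdiff, Gp, Finset.mem_insert, SimpleGraph.mem_neighborFinset]
          exact ⟨hjS, fun hc => hc.elim (fun h' => (Finset.mem_erase.1 (hI hj)).1 h') hja⟩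
        · rintro ⟨h1, h2⟩
          intro i hi j hj
          rcases Finset.mem_insert.1 hi with rfl | hi' <;> rcases Finset.mem_insert.1 hj with rfl | hj'
          · exact G.irrefl
          · intro hc
            have := h1 hj'
            simp only [Finset.mem_sdiff, Gp, Finset.mem_insert, SimpleGraph.mem_neighborFinset] at this
            exact this.2 (Or.inr hc)
          · intro hc
            have := h1 hi'
            simp only [Finset.mem_sdiff, Gp, Finset.mem_insert, SimpleGraph.mem_neighborFinset] at this
            exact this.2 (Or.inr hc.symm)
          · exact h2 i hi' j hj'
      rw [if_congr hiff rfl rfl]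
      by_cases h : I ⊆ S \ Gp G a ∧ Indep G I
      · rw [if_pos h, if_pos h, Finset.prod_insert haI]
      · rw [if_neg h, if_neg h]
    rw [Finset.sum_congr rfl hstep]
    rw [← Finset.sum_subset (Finset.powerset_mono.2 hsub)
      (fun I _ hI2 => by rw [if_neg (fun hc => hI2 hc.1)])]
    rw [Yf, Finset.mul_sum, Finset.sum_filter]
    apply Finset.sum_congr rfl
    intro I hI
    rw [if_congr (and_iff_right hI) rfl rfl]

/-- Telescoping lemma. -/
lemma Yf_tele (hy : ∀ i, 0 < y i) (P : Finset (Fin n) → ℝ) :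
    ∀ k : ℕ, ∀ T D : Finset (Fin n), (T \ D).card ≤ k → D ⊆ T →
    (∀ U, U ⊆ T → 0 < P U) →
    (∀ U, U ⊆ T → ∀ a ∈ U, Yf G y (Finset.univ \ U) * P (U.erase a) ≤
      P U * Yf G y (Finset.univ \ U.erase a)) →
    P D * Yf G y (Finset.univ \ T) ≤ P T * Yf G y (Finset.univ \ D) := by
  intro k
  induction k with
  | zero =>
    intro T D hcard hDT hpos hrat
    have : T \ D = ∅ := Finset.card_eq_zero.1 (Nat.le_zero.1 hcard)
    have hTD : T = D := Finset.Subset.antisymm (fun x hx => by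
      by_contra hc
      exact Finset.notMem_empty x (this ▸ Finset.mem_sdiff.2 ⟨hx, hc⟩)) hDT
    rw [hTD]
  | succ k ih =>
    intro T D hcard hDT hpos hrat
    by_cases hTD : T = D
    · rw [hTD]
    · have hne : (T \ D).Nonempty := by
        rw [Finset.sdiff_nonempty]
        intro h
        exact hTD (Finset.Subset.antisymm h hDT)
      obtain ⟨b, hb⟩ := hne
      have hbT : b ∈ T := (Finset.mem_sdiff.1 hb).1
      have hbD : b ∉ D := (Finset.mem_sdiff.1 hb).2
      set T' := T.erase b with hT'
      have hT'T : T' ⊆ T := Finset.erase_subset b T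
      have hDT' : D ⊆ T' := fun j hj =>
        Finset.mem_erase.2 ⟨fun h => hbD (h ▸ hj), hDT hj⟩
      have hcard' : (T' \ D).card ≤ k := by
        have : T' \ D = (T \ D).erase b := by
          ext j
          simp only [hT', Finset.mem_sdiff, Finset.mem_erase]
          tauto
        rw [this, Finset.card_erase_of_mem hb]
        omega
      have h2 := ih T' D hcard' hDT' (fun U hU => hpos U (hU.trans hT'T))
        (fun U hU => hrat U (hU.trans hT'T))
      have h1 := hrat T (Finset.Subset.refl T) b hbT
      have hPT' : 0 < P T' := hpos T' hT'T
      have hYT' : 0 < Yf G y (Finset.univ \ T') := Yf_pos G hy _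
      have hYD : 0 < Yf G y (Finset.univ \ D) := Yf_pos G hy _
      have hYT : 0 < Yf G y (Finset.univ \ T) := Yf_pos G hy _
      refine le_of_mul_le_mul_right ?_ (mul_pos hPT' hYT')
      have key := mul_le_mul h2 h1
        (mul_nonneg hYT.le hPT'.le) (mul_nonneg hPT'.le hYD.le)
      calc (P D * Yf G y (Finset.univ \ T)) * (P T' * Yf G y (Finset.univ \ T'))
          = (P D * Yf G y (Finset.univ \ T')) * (Yf G y (Finset.univ \ T) * P T') := by ring
        _ ≤ (P T' * Yf G y (Finset.univ \ D)) * (P T * Yf G y (Finset.univ \ T')) := key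
        _ = (P T * Yf G y (Finset.univ \ D)) * (P T' * Yf G y (Finset.univ \ T')) := by ring

end Aux

theorem cluster_expansion_induction {Ω : Type*} [MeasurableSpace Ω] (μ : Measure Ω) [IsProbabilityMeasure μ]
    {n : ℕ} (G : SimpleGraph (Fin n)) [DecidableRel G.Adj]
    (E : Fin n → Set Ω) (hE : ∀ i, MeasurableSet (E i)) (p : Fin n → ℝ)
    (hdep : ∀ i, ∀ J : Finset (Fin n), J ⊆ Finset.univ \ Gp G i →
      0 < (μ (⋂ j ∈ J, (E j)ᶜ)).toReal →
      (μ (E i ∩ ⋂ j ∈ J, (E j)ᶜ)).toReal / (μ (⋂ j ∈ J, (E j)ᶜ)).toReal ≤ p i)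
    (y : Fin n → ℝ) (hy : ∀ i, 0 < y i)
    (hcl : ∀ i, p i ≤ y i / Yf G y (Gp G i)) :
    ∀ S : Finset (Fin n), ∀ a ∈ S,
      0 < (μ (⋂ i ∈ S, (E i)ᶜ)).toReal ∧
      (μ (⋂ i ∈ S, (E i)ᶜ)).toReal / (μ (⋂ i ∈ S.erase a, (E i)ᶜ)).toReal ≥
        Yf G y (Finset.univ \ S) / Yf G y (Finset.univ \ S.erase a) := by
  set P : Finset (Fin n) → ℝ := fun S => (μ (⋂ i ∈ S, (E i)ᶜ)).toReal with hPdef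
  have hmono : ∀ {D T : Finset (Fin n)}, D ⊆ T →
      (⋂ i ∈ T, (E i)ᶜ) ⊆ ⋂ i ∈ D, (E i)ᶜ := by
    intro D T h x hx
    simp only [Set.mem_iInter] at hx ⊢
    exact fun i hi => hx i (h hi)
  have hP0 : P ∅ = 1 := by simp [hPdef]
  have hsplit : ∀ S : Finset (Fin n), ∀ a ∈ S,
      P (S.erase a) = P S + (μ (E a ∩ ⋂ i ∈ S.erase a, (E i)ᶜ)).toReal := by
    intro S a ha
    have hA : (⋂ i ∈ S, (E i)ᶜ) = (⋂ i ∈ S.erase a, (E i)ᶜ) ∩ (E a)ᶜ := by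
      conv_lhs => rw [← Finset.insert_erase ha]
      rw [Finset.set_biInter_insert]
      rw [Set.inter_comm]
    have hmeasEa := hE a
    have key := measure_inter_add_diff (μ := μ) (⋂ i ∈ S.erase a, (E i)ᶜ) hmeasEa
    have hdiff : (⋂ i ∈ S.erase a, (E i)ᶜ) \ E a = (⋂ i ∈ S.erase a, (E i)ᶜ) ∩ (E a)ᶜ := rfl
    have hcomm : (⋂ i ∈ S.erase a, (E i)ᶜ) ∩ E a = E a ∩ ⋂ i ∈ S.erase a, (E i)ᶜ :=
      Set.inter_comm _ _
    rw [hdiff, hcomm, ← hA] at key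
    have := congrArg ENNReal.toReal key
    rw [ENNReal.toReal_add (measure_ne_top μ _) (measure_ne_top μ _)] at this
    simp only [hPdef]
    linarith [this]
  -- main induction
  have main : ∀ N : ℕ, ∀ S : Finset (Fin n), S.card ≤ N →
      0 < P S ∧ ∀ a ∈ S, Yf G y (Finset.univ \ S) * P (S.erase a) ≤
        P S * Yf G y (Finset.univ \ S.erase a) := by
    intro N
    induction N with
    | zero =>
      intro S hS
      have : S = ∅ := Finset.card_eq_zero.1 (Nat.le_zero.1 hS)
      subst this
      refine ⟨by rw [hP0]; norm_num, fun a ha => absurd ha (Finset.notMem_empty a)⟩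
    | succ N ihN =>
      intro S hS
      by_cases hc : S.card ≤ N
      · exact ihN S hc
      · have hcard : S.card = N + 1 := le_antisymm hS (by omega)
        have hSne : S.Nonempty := Finset.card_pos.1 (by omega)
        have hrat : ∀ a ∈ S, Yf G y (Finset.univ \ S) * P (S.erase a) ≤
            P S * Yf G y (Finset.univ \ S.erase a) := by
          intro a ha
          set T := S.erase a with hT
          set D := S \ Gp G a with hD
          have haGp : a ∈ Gp G a := Finset.mem_insert_self a _
          have hTcard : T.card ≤ N := by
            rw [hT, Finset.card_erase_of_mem ha]; omega
          have hDT : D ⊆ T := by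
            intro j hj
            rw [hD, Finset.mem_sdiff] at hj
            exact Finset.mem_erase.2 ⟨fun h => hj.2 (h ▸ haGp), hj.1⟩
          have hPT : 0 < P T := (ihN T hTcard).1
          have hPD : 0 < P D :=
            (ihN D ((Finset.card_le_card hDT).trans hTcard)).1
          have hYT : 0 < Yf G y (Finset.univ \ T) := Yf_pos G hy _
          have hYS : 0 < Yf G y (Finset.univ \ S) := Yf_pos G hy _
          have hYD : 0 < Yf G y (Finset.univ \ D) := Yf_pos G hy _
          have hYg : 0 < Yf G y (Gp G a) := Yf_pos G hy _
          have hYsg : 0 < Yf G y ((Finset.univ \ S) \ Gp G a) := Yf_pos G hy _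
          -- telescoping
          have htel := Yf_tele G hy P (T \ D).card T D (le_refl _) hDT
            (fun U hU => (ihN U ((Finset.card_le_card hU).trans hTcard)).1)
            (fun U hU => (ihN U ((Finset.card_le_card hU).trans hTcard)).2)
          -- hdep application
          have hDsub : D ⊆ Finset.univ \ Gp G a := by
            intro j hj
            rw [hD, Finset.mem_sdiff] at hj
            exact Finset.mem_sdiff.2 ⟨Finset.mem_univ j, hj.2⟩
          have hdepD := hdep a D hDsub hPD
          have hpa : 0 ≤ p a := le_trans (div_nonneg ENNReal.toReal_nonneg hPD.le) hdepD
          have hm1 : (μ (E a ∩ ⋂ i ∈ D, (E i)ᶜ)).toReal ≤ p a * P D :=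
            (div_le_iff₀ hPD).1 hdepD
          have hm2 : (μ (E a ∩ ⋂ i ∈ T, (E i)ᶜ)).toReal ≤
              (μ (E a ∩ ⋂ i ∈ D, (E i)ᶜ)).toReal := by
            apply ENNReal.toReal_mono (measure_ne_top μ _)
            exact measure_mono (Set.inter_subset_inter_right _ (hmono hDT))
          have hm : (μ (E a ∩ ⋂ i ∈ T, (E i)ᶜ)).toReal ≤ p a * P D := hm2.trans hm1
          have hPS : P T = P S + (μ (E a ∩ ⋂ i ∈ T, (E i)ᶜ)).toReal := hsplit S a ha
          -- Y identity at a on univ \ T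
          have haT : a ∈ Finset.univ \ T := by
            rw [Finset.mem_sdiff, hT]
            exact ⟨Finset.mem_univ a, Finset.notMem_erase a S⟩
          have hid := Yf_identity G (y := y) a (Finset.univ \ T) haT
          have he1 : (Finset.univ \ T).erase a = Finset.univ \ S := by
            ext j
            simp only [Finset.mem_erase, Finset.mem_sdiff, Finset.mem_univ, true_and, hT,
              Finset.mem_erase]
            constructor
            · rintro ⟨hja, hj⟩ hjS
              exact hj ⟨hja, hjS⟩
            · intro hjS
              exact ⟨fun h => hjS (h ▸ ha), fun h => hjS h.2⟩
          have he2 : (Finset.univ \ T) \ Gp G a = (Finset.univ \ S) \ Gp G a := by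
            ext j
            simp only [Finset.mem_sdiff, Finset.mem_univ, true_and, hT, Finset.mem_erase]
            constructor
            · rintro ⟨hj, hjg⟩
              exact ⟨fun hjS => hj ⟨fun h => hjg (h ▸ haGp), hjS⟩, hjg⟩
            · rintro ⟨hj, hjg⟩
              exact ⟨fun h => hj h.2, hjg⟩
          rw [he1, he2] at hid
          -- submultiplicativity : univ \ D = ((univ\S)\Gp a) ∪ Gp a
          have hDc : Finset.univ \ D = ((Finset.univ \ S) \ Gp G a) ∪ Gp G a := by
            ext j
            simp only [Finset.mem_union, Finset.mem_sdiff, Finset.mem_univ, true_and, hD]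
            by_cases hg : j ∈ Gp G a <;> simp [hg]
          have hsub2 : Yf G y (Finset.univ \ D) ≤
              Yf G y ((Finset.univ \ S) \ Gp G a) * Yf G y (Gp G a) := by
            rw [hDc]
            exact Yf_union_le G hy _ _ (Finset.sdiff_disjoint)
          have e3 : p a * Yf G y (Gp G a) ≤ y a := (le_div_iff₀ hYg).1 (hcl a)
          -- chain
          have e1 : p a * (P D * Yf G y (Finset.univ \ T)) ≤
              p a * (P T * Yf G y (Finset.univ \ D)) :=
            mul_le_mul_of_nonneg_left htel hpa
          have e2 : p a * (P T * Yf G y (Finset.univ \ D)) ≤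
              p a * (P T * (Yf G y ((Finset.univ \ S) \ Gp G a) * Yf G y (Gp G a))) :=
            mul_le_mul_of_nonneg_left (mul_le_mul_of_nonneg_left hsub2 hPT.le) hpa
          have e5 : (p a * Yf G y (Gp G a)) * (P T * Yf G y ((Finset.univ \ S) \ Gp G a)) ≤
              y a * (P T * Yf G y ((Finset.univ \ S) \ Gp G a)) :=
            mul_le_mul_of_nonneg_right e3 (by positivity)
          have h6 : (μ (E a ∩ ⋂ i ∈ T, (E i)ᶜ)).toReal * Yf G y (Finset.univ \ T) ≤
              (p a * P D) * Yf G y (Finset.univ \ T) :=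
            mul_le_mul_of_nonneg_right hm hYT.le
          nlinarith [e1, e2, e5, h6, hid, hPS]
        refine ⟨?_, hrat⟩
        obtain ⟨a, ha⟩ := hSne
        have h := hrat a ha
        have hPT : 0 < P (S.erase a) :=
          (ihN (S.erase a) (by rw [Finset.card_erase_of_mem ha]; omega)).1
        have hYS : 0 < Yf G y (Finset.univ \ S) := Yf_pos G hy _
        have hYT : 0 < Yf G y (Finset.univ \ S.erase a) := Yf_pos G hy _
        nlinarith [h, hPT, hYS, hYT]
  intro S a ha
  obtain ⟨hpos, hrat⟩ := main S.card S (le_refl _)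
  have hPT : 0 < P (S.erase a) := (main (S.erase a).card (S.erase a) (le_refl _)).1
  have hYT : 0 < Yf G y (Finset.univ \ S.erase a) := Yf_pos G hy _
  have hYS : 0 < Yf G y (Finset.univ \ S) := Yf_pos G hy _
  refine ⟨hpos, ?_⟩
  rw [ge_iff_le, div_le_div_iff₀ hYT hPT]
  exact hrat a ha
end

section
/- For every integer d ≥ 2, (d/(d−1))^{d−1} < e − 1/d. -/
theorem pow_bound (d : ℕ) (hd : 2 ≤ d) :
    ((d : ℝ) / ((d : ℝ) - 1)) ^ (d - 1) < Real.exp 1 - 1 / d := by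
  have hc : (2 : ℝ) ≤ (d : ℝ) := by exact_mod_cast hd
  set c : ℝ := (d : ℝ) with hcdef
  have hc1pos : (0 : ℝ) < c - 1 := by linarith
  have hcpos : (0 : ℝ) < c := by linarith
  set t : ℝ := (1 - 1 / (2 * c)) / (c - 1) with ht
  have htpos : 0 < t := by
    apply div_pos _ hc1pos
    have h1 : 1 / (2 * c) ≤ 1 / 4 := by
      rw [div_le_div_iff₀ (by linarith) (by norm_num)]
      linarith
    linarith
  have hkey : c / (c - 1) ≤ Real.exp t := by
    have h3 : 1 + t + t ^ 2 / 2 ≤ Real.exp t := Real.quadratic_le_exp_of_nonneg htpos.le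
    have halg : c / (c - 1) ≤ 1 + t + t ^ 2 / 2 := by
      rw [div_le_iff₀ hc1pos, ht]
      have hc0 : c ≠ 0 := ne_of_gt hcpos
      have hc10 : c - 1 ≠ 0 := ne_of_gt hc1pos
      field_simp
      ring_nf
      nlinarith [sq_nonneg c, sq_nonneg (c - 1), hcpos, hc1pos, sq_nonneg (c * (c - 1)),
        mul_pos hcpos hc1pos]
    linarith
  have hcast : ((d - 1 : ℕ) : ℝ) = c - 1 := by
    rw [hcdef]
    push_cast [Nat.cast_sub (by omega : 1 ≤ d)]
    ring
  have hpow : (c / (c - 1)) ^ (d - 1) ≤ Real.exp (1 - 1 / (2 * c)) := by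
    calc (c / (c - 1)) ^ (d - 1) ≤ (Real.exp t) ^ (d - 1) := by
          apply pow_le_pow_left₀ (by positivity) hkey
      _ = Real.exp (((d - 1 : ℕ) : ℝ) * t) := by rw [Real.exp_nat_mul]
      _ = Real.exp (1 - 1 / (2 * c)) := by
          rw [hcast, ht, mul_div_cancel₀ _ (ne_of_gt hc1pos)]
  have hfinal : Real.exp (1 - 1 / (2 * c)) < Real.exp 1 - 1 / c := by
    have hs : 1 + 1 / (2 * c) ≤ Real.exp (1 / (2 * c)) := by
      have := Real.add_one_le_exp (1 / (2 * c)); linarith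
    have hspos : (0 : ℝ) < 1 + 1 / (2 * c) := by positivity
    have h1 : Real.exp (1 - 1 / (2 * c)) = Real.exp 1 / Real.exp (1 / (2 * c)) := by
      rw [← Real.exp_sub]
    have h2 : Real.exp 1 / Real.exp (1 / (2 * c)) ≤ Real.exp 1 / (1 + 1 / (2 * c)) := by
      apply div_le_div_of_nonneg_left (Real.exp_pos 1).le hspos hs
    have he : (2.7182818283 : ℝ) < Real.exp 1 := Real.exp_one_gt_d9
    have h3 : Real.exp 1 / (1 + 1 / (2 * c)) < Real.exp 1 - 1 / c := by
      rw [div_lt_iff₀ hspos]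
      have hcc : (0 : ℝ) < c ^ 2 := by positivity
      have key : 0 < Real.exp 1 * c - 2 * c - 1 := by nlinarith
      have expand : (Real.exp 1 - 1 / c) * (1 + 1 / (2 * c)) - Real.exp 1
          = (Real.exp 1 * c - 2 * c - 1) / (2 * c ^ 2) := by
        field_simp
        ring
      nlinarith [div_pos key (by positivity : (0:ℝ) < 2 * c ^ 2)]
    linarith [h1 ▸ h2.trans_lt h3]
  calc (c / (c - 1)) ^ (d - 1) ≤ Real.exp (1 - 1 / (2 * c)) := hpow
    _ < Real.exp 1 - 1 / c := hfinal
end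

section
/- (Near-optimal symmetric LLL) Let G be a graph on [n] with maximum degree d ≥ 2 and E_1,...,E_n events such that Pr[E_i | ∩_{j∈J} ¬E_j] ≤ p for all i and all J ⊆ [n]∖Γ⁺(i). If p ≤ 1/(e·d), then Pr[∩_{i=1}^n ¬E_i] > 0. -/
open Finset MeasureTheory

lemma numeric1 (d : ℕ) (hd : 2 ≤ d) :
    (1 + 1/((d:ℝ)-1))^(d-1) < Real.exp 1 := by
  have hm1 : (1:ℕ) ≤ d - 1 := by omega
  have hmR : (0:ℝ) < ((d-1 : ℕ):ℝ) := by exact_mod_cast hm1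
  have hcast : ((d:ℝ) - 1) = ((d-1:ℕ):ℝ) := by
    have : (1:ℕ) ≤ d := by omega
    push_cast [this]; ring
  have h1 : (1:ℝ)/((d-1:ℕ):ℝ) + 1 < Real.exp (1/((d-1:ℕ):ℝ)) :=
    Real.add_one_lt_exp (by positivity)
  calc (1 + 1/((d:ℝ)-1))^(d-1) = (1/((d-1:ℕ):ℝ) + 1)^(d-1) := by rw [hcast]; ring_nf
    _ < (Real.exp (1/((d-1:ℕ):ℝ)))^(d-1) :=
        pow_lt_pow_left₀ h1 (by positivity) (by omega)
    _ = Real.exp 1 := by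
        rw [← Real.exp_nat_mul, mul_one_div, div_self (ne_of_gt hmR)]

lemma numeric2 (d : ℕ) (hd : 2 ≤ d) (pc : ℝ) (hp0 : 0 ≤ pc)
    (hpe : pc ≤ 1 / (Real.exp 1 * d)) :
    pc / (1 - 1/(d:ℝ))^(d-1) < 1/d ∧ pc / (1 - 1/(d:ℝ))^d < 1 := by
  set c : ℝ := 1 - 1/(d:ℝ) with hc
  have hd0 : (0:ℝ) < d := by exact_mod_cast (by omega : 0 < d)
  have hd1 : (1:ℝ) < d := by exact_mod_cast (by omega : 1 < d)
  have hd2 : (2:ℝ) ≤ d := by exact_mod_cast hd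
  have hc0 : 0 < c := by
    have : 1/(d:ℝ) < 1 := by rw [div_lt_one hd0]; exact hd1
    rw [hc]; linarith
  have hdm1 : (d:ℝ) - 1 ≠ 0 := by linarith
  have hinv : 1/c = 1 + 1/((d:ℝ)-1) := by
    rw [hc]; field_simp; ring
  have h2 : (1/c)^(d-1) < Real.exp 1 := by rw [hinv]; exact numeric1 d hd
  have hcp : 0 < c^(d-1) := pow_pos hc0 _
  have hexp : 0 < Real.exp 1 := Real.exp_pos 1
  have h3 : 1/Real.exp 1 < c^(d-1) := by
    rw [div_pow, one_pow, div_lt_iff₀ hcp] at h2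
    rw [div_lt_iff₀ hexp]; nlinarith
  have hkey : pc < (1/d) * c^(d-1) := by
    have he : 1/(Real.exp 1 * d) = (1/d) * (1/Real.exp 1) := by
      field_simp
    calc pc ≤ 1/(Real.exp 1 * d) := hpe
      _ = (1/d) * (1/Real.exp 1) := he
      _ < (1/d) * c^(d-1) := by
          apply mul_lt_mul_of_pos_left h3 (by positivity)
  have h1d : 1/(d:ℝ) ≤ c := by
    have h5 : 1/(d:ℝ) ≤ 1/2 := by
      apply one_div_le_one_div_of_le <;> linarith
    rw [hc]; linarith
  constructor
  · rw [div_lt_iff₀ hcp]; nlinarith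
  · have hdd : c^d = c^(d-1) * c := by
      rw [← pow_succ]; congr 1; omega
    rw [div_lt_one (by positivity : (0:ℝ) < c^d), hdd]
    have hstep : 1/(d:ℝ) * c^(d-1) ≤ c * c^(d-1) := mul_le_mul_of_nonneg_right h1d hcp.le
    have hcomm : c * c^(d-1) = c^(d-1) * c := mul_comm _ _
    exact hkey.trans_le (hstep.trans hcomm.le)

theorem symmetric_LLL {Ω : Type*} [MeasurableSpace Ω] (μ : Measure Ω) [IsProbabilityMeasure μ]
    {n : ℕ} (G : SimpleGraph (Fin n)) [DecidableRel G.Adj]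
    (E : Fin n → Set Ω) (hE : ∀ i, MeasurableSet (E i)) (p : Fin n → ℝ)
    (d : ℕ) (hd : 2 ≤ d) (hdeg : ∀ i, G.degree i ≤ d)
    (pc : ℝ) (hpconst : ∀ i, p i = pc)
    (hdep : ∀ i, ∀ J : Finset (Fin n), J ⊆ Finset.univ \ Gp G i →
      0 < (μ (⋂ j ∈ J, (E j)ᶜ)).toReal →
      (μ (E i ∩ ⋂ j ∈ J, (E j)ᶜ)).toReal / (μ (⋂ j ∈ J, (E j)ᶜ)).toReal ≤ p i)
    (hpe : pc ≤ 1 / (Real.exp 1 * d)) :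
    0 < (μ (⋂ i, (E i)ᶜ)).toReal := by
  classical
  rcases Nat.eq_zero_or_pos n with hn | hn
  · subst hn
    have : (⋂ i : Fin 0, (E i)ᶜ) = Set.univ := by
      exact Set.iInter_of_empty _
    rw [this]
    simp
  -- basic probability facts
  have hEip : ∀ i, (μ (E i)).toReal ≤ pc := by
    intro i
    have h0 : (⋂ j ∈ (∅:Finset (Fin n)), (E j)ᶜ) = Set.univ := by simp
    have h1 := hdep i ∅ (Finset.empty_subset _) (by rw [h0]; simp)
    rw [h0, hpconst i] at h1
    simpa using h1
  have hp0 : 0 ≤ pc := le_trans ENNReal.toReal_nonneg (hEip ⟨0, hn⟩)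
  obtain ⟨hK1, hr1⟩ := numeric2 d hd pc hp0 hpe
  obtain ⟨c, hcdef⟩ : ∃ c : ℝ, c = 1 - 1/(d:ℝ) := ⟨_, rfl⟩
  rw [← hcdef] at hK1 hr1
  have hd0R : (0:ℝ) < d := by exact_mod_cast (by omega : 0 < d)
  have hd1R : (1:ℝ) < d := by exact_mod_cast (by omega : 1 < d)
  have hc0 : 0 < c := by
    have : 1/(d:ℝ) < 1 := by rw [div_lt_one hd0R]; exact hd1R
    rw [hcdef]; linarith
  have hc1 : c ≤ 1 := by
    have : 0 < 1/(d:ℝ) := by positivity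
    rw [hcdef]; linarith
  obtain ⟨r, hrdef⟩ : ∃ r : ℝ, r = pc / c^d := ⟨_, rfl⟩
  rw [← hrdef] at hr1
  have hr0 : 0 ≤ r := hrdef ▸ div_nonneg hp0 (pow_pos hc0 d).le
  have h1r : 0 < 1 - r := by linarith
  -- measure helpers
  have hmono : ∀ {s t : Set Ω}, s ⊆ t → (μ s).toReal ≤ (μ t).toReal := fun h =>
    ENNReal.toReal_mono (measure_ne_top μ _) (measure_mono h)
  have hsub : ∀ {S T : Finset (Fin n)}, T ⊆ S →
      (⋂ j ∈ S, (E j)ᶜ) ⊆ ⋂ j ∈ T, (E j)ᶜ := by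
    intro S T h x hx
    simp only [Set.mem_iInter] at hx ⊢
    exact fun j hj => hx j (h hj)
  have hsplit : ∀ (k : Fin n) (T : Finset (Fin n)),
      (μ (⋂ j ∈ insert k T, (E j)ᶜ)).toReal
        = (μ (⋂ j ∈ T, (E j)ᶜ)).toReal - (μ (E k ∩ ⋂ j ∈ T, (E j)ᶜ)).toReal := by
    intro k T
    have h1 : (⋂ j ∈ insert k T, (E j)ᶜ) = (⋂ j ∈ T, (E j)ᶜ) \ E k := by
      ext x
      simp only [Set.mem_iInter, Finset.mem_insert, Set.mem_diff, Set.mem_compl_iff]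
      constructor
      · intro h; exact ⟨fun j hj => h j (Or.inr hj), h k (Or.inl rfl)⟩
      · rintro ⟨ha, hb⟩ j hj
        rcases hj with rfl | hj
        · exact hb
        · exact ha j hj
    have h2 := measure_inter_add_diff (μ := μ) (⋂ j ∈ T, (E j)ᶜ) (hE k)
    have h3 : (μ ((⋂ j ∈ T, (E j)ᶜ) ∩ E k)).toReal
        + (μ ((⋂ j ∈ T, (E j)ᶜ) \ E k)).toReal = (μ (⋂ j ∈ T, (E j)ᶜ)).toReal := by
      rw [← ENNReal.toReal_add (measure_ne_top μ _) (measure_ne_top μ _), h2]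
    rw [h1, Set.inter_comm (E k)]
    linarith
  -- ratio helpers
  have hratio : ∀ s : ℕ, s ≤ d → pc / c ^ s ≤ r := by
    intro s hs
    have hpow : c ^ d ≤ c ^ s := pow_le_pow_of_le_one hc0.le hc1 hs
    rw [hrdef, div_le_div_iff₀ (pow_pos hc0 s) (pow_pos hc0 d)]
    exact mul_le_mul_of_nonneg_left hpow hp0
  have hratio1 : ∀ s : ℕ, s ≤ d - 1 → pc / c ^ s ≤ 1/(d:ℝ) := by
    intro s hs
    have hpow : c ^ (d-1) ≤ c ^ s := pow_le_pow_of_le_one hc0.le hc1 hs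
    have h1 : pc / c ^ s ≤ pc / c ^ (d-1) := by
      rw [div_le_div_iff₀ (pow_pos hc0 s) (pow_pos hc0 (d-1))]
      exact mul_le_mul_of_nonneg_left hpow hp0
    exact h1.trans hK1.le
  -- main induction
  have main : ∀ m : ℕ, ∀ S : Finset (Fin n), S.card ≤ m →
      (1 - r) ^ S.card ≤ (μ (⋂ j ∈ S, (E j)ᶜ)).toReal ∧
      ∀ i, i ∉ S → (μ (E i ∩ ⋂ j ∈ S, (E j)ᶜ)).toReal
          ≤ pc / c ^ ((S ∩ G.neighborFinset i).card) * (μ (⋂ j ∈ S, (E j)ᶜ)).toReal := by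
    intro m
    induction m with
    | zero =>
      intro S hS
      have hSe : S = ∅ := Finset.card_eq_zero.mp (Nat.le_zero.mp hS)
      subst hSe
      constructor
      · simp
      · intro i _
        have h0 : (⋂ j ∈ (∅:Finset (Fin n)), (E j)ᶜ) = Set.univ := by simp
        rw [h0]
        simpa using hEip i
    | succ m ih =>
      intro S hS
      by_cases hcase : S.card ≤ m
      · exact ih S hcase
      have hSm : S.card = m + 1 := by omega
      have hA : (1 - r) ^ S.card ≤ (μ (⋂ j ∈ S, (E j)ᶜ)).toReal := by
        have hne : S.Nonempty := by rw [← Finset.card_pos, hSm]; omega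
        obtain ⟨k, hk⟩ := hne
        have hcard' : (S.erase k).card = m := by
          rw [Finset.card_erase_of_mem hk, hSm]
          omega
        obtain ⟨ihA, ihB⟩ := ih (S.erase k) (le_of_eq hcard')
        have hBk := ihB k (Finset.notMem_erase k S)
        have hskd : ((S.erase k) ∩ G.neighborFinset k).card ≤ d :=
          le_trans (Finset.card_le_card Finset.inter_subset_right)
            (le_trans (le_of_eq (G.card_neighborFinset_eq_degree k)) (hdeg k))
        have hBk' : (μ (E k ∩ ⋂ j ∈ S.erase k, (E j)ᶜ)).toReal
            ≤ r * (μ (⋂ j ∈ S.erase k, (E j)ᶜ)).toReal :=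
          le_trans hBk (mul_le_mul_of_nonneg_right (hratio _ hskd) ENNReal.toReal_nonneg)
        have heq : (μ (⋂ j ∈ S, (E j)ᶜ)).toReal
            = (μ (⋂ j ∈ S.erase k, (E j)ᶜ)).toReal
              - (μ (E k ∩ ⋂ j ∈ S.erase k, (E j)ᶜ)).toReal := by
          conv_lhs => rw [← Finset.insert_erase hk]
          exact hsplit k (S.erase k)
        rw [hcard'] at ihA
        have t1 : (1-r) * (1-r)^m ≤ (1-r) * (μ (⋂ j ∈ S.erase k, (E j)ᶜ)).toReal :=
          mul_le_mul_of_nonneg_left ihA h1r.le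
        have t2 : (1-r) * (μ (⋂ j ∈ S.erase k, (E j)ᶜ)).toReal
            = (μ (⋂ j ∈ S.erase k, (E j)ᶜ)).toReal - r * (μ (⋂ j ∈ S.erase k, (E j)ᶜ)).toReal := by
          ring
        calc (1-r) ^ S.card = (1-r) * (1-r)^m := by rw [hSm]; ring
          _ ≤ (μ (⋂ j ∈ S, (E j)ᶜ)).toReal := by rw [heq]; linarith
      refine ⟨hA, ?_⟩
      intro i hi
      have hCl : ∀ t : ℕ, ∀ T : Finset (Fin n), T ⊆ S → (T ∩ G.neighborFinset i).card = t →
          c ^ t * (μ (⋂ j ∈ T \ G.neighborFinset i, (E j)ᶜ)).toReal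
            ≤ (μ (⋂ j ∈ T, (E j)ᶜ)).toReal := by
        intro t
        induction t with
        | zero =>
          intro T hTS h0
          have hTd : T \ G.neighborFinset i = T := by
            rw [Finset.sdiff_eq_self_iff_disjoint, Finset.disjoint_iff_inter_eq_empty]
            exact Finset.card_eq_zero.mp h0
          rw [hTd, pow_zero, one_mul]
        | succ t iht =>
          intro T hTS ht
          have hne : (T ∩ G.neighborFinset i).Nonempty := by
            rw [← Finset.card_pos, ht]; omega
          obtain ⟨k, hk⟩ := hne
          have hkT : k ∈ T := (Finset.mem_inter.mp hk).1
          have hkN : k ∈ G.neighborFinset i := (Finset.mem_inter.mp hk).2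
          have hT'S : T.erase k ⊆ S := (Finset.erase_subset k T).trans hTS
          have hT'card : (T.erase k).card ≤ m := by
            have h1 : T.card ≤ m + 1 := le_trans (Finset.card_le_card hTS) (le_of_eq hSm)
            rw [Finset.card_erase_of_mem hkT]; omega
          obtain ⟨_, ihB'⟩ := ih (T.erase k) hT'card
          have hBk := ihB' k (Finset.notMem_erase k T)
          have hiT' : i ∉ T.erase k := fun h => hi (hT'S h)
          have hiNk : i ∈ G.neighborFinset k := by
            rw [SimpleGraph.mem_neighborFinset] at hkN ⊢
            exact hkN.symm
          have hsubk : (T.erase k) ∩ G.neighborFinset k ⊆ (G.neighborFinset k).erase i := by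
            intro j hj
            rw [Finset.mem_inter] at hj
            rw [Finset.mem_erase]
            exact ⟨fun h => hiT' (h ▸ hj.1), hj.2⟩
          have hcard1 : ((T.erase k) ∩ G.neighborFinset k).card ≤ d - 1 := by
            have h1 := Finset.card_le_card hsubk
            rw [Finset.card_erase_of_mem hiNk] at h1
            have hdk : (G.neighborFinset k).card ≤ d :=
              le_trans (le_of_eq (G.card_neighborFinset_eq_degree k)) (hdeg k)
            omega
          have hx : pc / c ^ ((T.erase k ∩ G.neighborFinset k).card) ≤ 1/(d:ℝ) :=
            hratio1 _ hcard1
          have hBk' : (μ (E k ∩ ⋂ j ∈ T.erase k, (E j)ᶜ)).toReal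
              ≤ (1/(d:ℝ)) * (μ (⋂ j ∈ T.erase k, (E j)ᶜ)).toReal :=
            le_trans hBk (mul_le_mul_of_nonneg_right hx ENNReal.toReal_nonneg)
          have heq : (μ (⋂ j ∈ T, (E j)ᶜ)).toReal
              = (μ (⋂ j ∈ T.erase k, (E j)ᶜ)).toReal
                - (μ (E k ∩ ⋂ j ∈ T.erase k, (E j)ᶜ)).toReal := by
            conv_lhs => rw [← Finset.insert_erase hkT]
            exact hsplit k (T.erase k)
          have hrec := iht (T.erase k) hT'S (by
            rw [Finset.erase_inter, Finset.card_erase_of_mem hk, ht]; omega)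
          have hTT' : T.erase k \ G.neighborFinset i = T \ G.neighborFinset i := by
            ext j
            simp only [Finset.mem_sdiff, Finset.mem_erase]
            constructor
            · rintro ⟨⟨_, hjT⟩, hjN⟩; exact ⟨hjT, hjN⟩
            · rintro ⟨hjT, hjN⟩; exact ⟨⟨fun h => hjN (h ▸ hkN), hjT⟩, hjN⟩
          rw [hTT'] at hrec
          have hcX : c * (μ (⋂ j ∈ T.erase k, (E j)ᶜ)).toReal
              ≤ (μ (⋂ j ∈ T, (E j)ᶜ)).toReal := by
            have h1 : c * (μ (⋂ j ∈ T.erase k, (E j)ᶜ)).toReal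
                = (μ (⋂ j ∈ T.erase k, (E j)ᶜ)).toReal
                  - (1/(d:ℝ)) * (μ (⋂ j ∈ T.erase k, (E j)ᶜ)).toReal := by
              rw [hcdef]; ring
            rw [heq]; linarith
          calc c ^ (t+1) * (μ (⋂ j ∈ T \ G.neighborFinset i, (E j)ᶜ)).toReal
              = c * (c^t * (μ (⋂ j ∈ T \ G.neighborFinset i, (E j)ᶜ)).toReal) := by ring
            _ ≤ c * (μ (⋂ j ∈ T.erase k, (E j)ᶜ)).toReal :=
                mul_le_mul_of_nonneg_left hrec hc0.le
            _ ≤ (μ (⋂ j ∈ T, (E j)ᶜ)).toReal := hcX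
      have hC := hCl _ S (subset_refl S) rfl
      have hsubJ : S \ G.neighborFinset i ⊆ Finset.univ \ Gp G i := by
        intro j hj
        rw [Finset.mem_sdiff] at hj ⊢
        refine ⟨Finset.mem_univ j, ?_⟩
        rw [Gp, Finset.mem_insert]
        rintro (rfl | hN)
        · exact hi hj.1
        · exact hj.2 hN
      have hpos2 : 0 < (μ (⋂ j ∈ S \ G.neighborFinset i, (E j)ᶜ)).toReal := by
        have h1 : 0 < (1 - r)^S.card := pow_pos h1r _
        exact lt_of_lt_of_le (lt_of_lt_of_le h1 hA) (hmono (hsub Finset.sdiff_subset))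
      have hd2 := hdep i (S \ G.neighborFinset i) hsubJ hpos2
      rw [hpconst i, div_le_iff₀ hpos2] at hd2
      have hmonoi : (μ (E i ∩ ⋂ j ∈ S, (E j)ᶜ)).toReal
          ≤ (μ (E i ∩ ⋂ j ∈ S \ G.neighborFinset i, (E j)ᶜ)).toReal :=
        hmono (Set.inter_subset_inter_right _ (hsub Finset.sdiff_subset))
      have hcs : (0:ℝ) < c ^ ((S ∩ G.neighborFinset i).card) := pow_pos hc0 _
      calc (μ (E i ∩ ⋂ j ∈ S, (E j)ᶜ)).toReal
          ≤ (μ (E i ∩ ⋂ j ∈ S \ G.neighborFinset i, (E j)ᶜ)).toReal := hmonoi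
        _ ≤ pc * (μ (⋂ j ∈ S \ G.neighborFinset i, (E j)ᶜ)).toReal := hd2
        _ ≤ pc / c ^ ((S ∩ G.neighborFinset i).card) * (μ (⋂ j ∈ S, (E j)ᶜ)).toReal := by
            rw [div_mul_eq_mul_div, le_div_iff₀ hcs]
            calc pc * (μ (⋂ j ∈ S \ G.neighborFinset i, (E j)ᶜ)).toReal
                  * c ^ ((S ∩ G.neighborFinset i).card)
                = pc * (c ^ ((S ∩ G.neighborFinset i).card)
                    * (μ (⋂ j ∈ S \ G.neighborFinset i, (E j)ᶜ)).toReal) := by ring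
              _ ≤ pc * (μ (⋂ j ∈ S, (E j)ᶜ)).toReal := mul_le_mul_of_nonneg_left hC hp0
  have hfin := (main n Finset.univ (by simp)).1
  have hgoal : (⋂ i, (E i)ᶜ) = ⋂ j ∈ Finset.univ, (E j)ᶜ := by simp
  rw [hgoal]
  exact lt_of_lt_of_le (pow_pos h1r _) hfin
end
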